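/- Let A : X^n → T be a test-statistic selection procedure and X a dataset drawn from a distribution S over X^n such that the mutual information, measured in bits, satisfies I(X; A(X)) ≤ m. Then γ(α) = (α/2) · 2^{−(2/α)(m + 0.54)} is a valid p-value correction function for A: for every significance level α ∈ (0,1] and every distribution S over X^n, the probability (over X ~ S and the coins of A) that the selected statistic φ_i = A(X) satisfies both S ∈ H_0^(i) and p_i(φ_i(X)) ≤ γ(α) is at most α. -/

import Mathlib

open scoped ENNReal

/-- The probability that a sample from the probability mass function `μ` lands in `S`. -/
noncomputable def prob {α : Type*} (μ : PMF α) (S : Set α) : ℝ :=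
  (μ.toOuterMeasure S).toReal

/-- The independent coupling of two distributions: a pair whose components are independent
with the given marginal distributions. -/
noncomputable def indepPair {α β : Type*} (p : PMF α) (q : PMF β) : PMF (α × β) :=
  p.bind fun a => q.map fun b => (a, b)

/-- `MaxInfoLe μ b k` : the `b`-approximate max-information of the joint distribution `μ`
is at most `k` (measured in bits):  for every event `O` with `Pr[(X,Z) ∈ O] > b`,
`Pr[(X,Z) ∈ O] - b ≤ 2^k · Pr[X ⊗ Z ∈ O]`. -/
def MaxInfoLe {α β : Type*} (μ : PMF (α × β)) (b k : ℝ) : Prop :=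
  ∀ O : Set (α × β), b < prob μ O →
    prob μ O - b ≤ 2 ^ k * prob (indepPair (μ.map Prod.fst) (μ.map Prod.snd)) O

/-- The `n`-fold product (i.i.d.) distribution `P^n` on datasets of size `n`. -/
noncomputable def iidPMF {X : Type*} (P : PMF X) : (n : ℕ) → PMF (Fin n → X)
  | 0 => PMF.pure (fun i => i.elim0)
  | n + 1 => P.bind fun a => (iidPMF P n).map fun x => Fin.cons a x

/-- The joint distribution of `(X, A(X))` where `X ∼ μ` and `A` is a randomized algorithm. -/
noncomputable def jointPMF {D Y : Type*} (μ : PMF D) (A : D → PMF Y) : PMF (D × Y) :=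
  μ.bind fun x => (A x).map fun y => (x, y)

/-- The summand of the mutual information (in bits) of a joint distribution `μ` at a point. -/
noncomputable def miSummandBits {α β : Type*} (μ : PMF (α × β)) (q : α × β) : ℝ :=
  (μ q).toReal *
    Real.logb 2 ((μ q).toReal / (((μ.map Prod.fst) q.1).toReal * ((μ.map Prod.snd) q.2).toReal))

/-- The mutual information, measured in bits, between the two components of a joint
distribution `μ`. -/
noncomputable def mutualInfoBits {α β : Type*} (μ : PMF (α × β)) : ℝ :=
  ∑' q : α × β, miSummandBits μ q

section Aux

lemma pair_pmf_apply {D Y : Type*} (μ : PMF D) (f : D → PMF Y) (x : D) (t : Y) :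
    (μ.bind fun a => (f a).map fun b => (a, b)) (x, t) = μ x * f x t := by
  classical
  simp only [PMF.bind_apply, PMF.map_apply, Prod.mk.injEq]
  rw [tsum_eq_single x]
  · congr 1
    rw [tsum_eq_single t]
    · simp
    · intro y hy
      rw [if_neg]
      rintro ⟨-, h2⟩; exact hy h2.symm
  · intro x' hx'
    have h0 : ∀ y, (if x = x' ∧ t = y then f x' y else 0) = 0 := by
      intro y
      rw [if_neg]
      rintro ⟨h1, -⟩; exact hx' h1.symm
    simp [h0]

lemma jointPMF_apply {D Y : Type*} (μ : PMF D) (A : D → PMF Y) (x : D) (t : Y) :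
    jointPMF μ A (x, t) = μ x * A x t := pair_pmf_apply μ A x t

lemma indepPair_apply {α β : Type*} (p : PMF α) (q : PMF β) (a : α) (b : β) :
    indepPair p q (a, b) = p a * q b := pair_pmf_apply p (fun _ => q) a b

lemma jointPMF_map_fst {D Y : Type*} (μ : PMF D) (A : D → PMF Y) :
    (jointPMF μ A).map Prod.fst = μ := by
  unfold jointPMF
  rw [PMF.map_bind]
  have h : ∀ x, ((A x).map fun y => (x, y)).map Prod.fst = PMF.pure x := by
    intro x
    rw [PMF.map_comp]
    have h2 : (Prod.fst ∘ fun y : Y => (x, y)) = Function.const Y x := rfl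
    rw [h2, PMF.map_const]
  simp only [h, PMF.bind_pure]

lemma toOuterMeasure_le_one {D : Type*} (S : PMF D) (E : Set D) :
    S.toOuterMeasure E ≤ 1 := by
  rw [PMF.toOuterMeasure_apply]
  calc ∑' x, E.indicator S x ≤ ∑' x, S x :=
        ENNReal.tsum_le_tsum fun x => Set.indicator_le_self E S x
    _ = 1 := S.tsum_coe

lemma pvalue_bound {D : Type*} (S : PMF D) (v : D → ℝ) (c : ℝ) :
    S.toOuterMeasure {x | prob S {x' | v x ≤ v x'} ≤ c} ≤ ENNReal.ofReal c := by
  classical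
  set E : Set D := {x | prob S {x' | v x ≤ v x'} ≤ c} with hE
  rw [PMF.toOuterMeasure_apply, ENNReal.tsum_eq_iSup_sum]
  refine iSup_le fun s => ?_
  rw [Finset.sum_indicator_eq_sum_filter]
  set s' := s.filter (fun x => x ∈ E) with hs'
  rcases s'.eq_empty_or_nonempty with h | hne
  · simp [h]
  · obtain ⟨x0, hx0s, hx0min⟩ := s'.exists_min_image v hne
    have hx0E : x0 ∈ E := (Finset.mem_filter.1 hx0s).2
    have hsub : ∀ x ∈ s', x ∈ {x' | v x0 ≤ v x'} := fun x hx => hx0min x hx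
    have h1 : ∑ x ∈ s', S x ≤ S.toOuterMeasure {x' | v x0 ≤ v x'} := by
      rw [PMF.toOuterMeasure_apply]
      calc ∑ x ∈ s', S x = ∑ x ∈ s', ({x' | v x0 ≤ v x'}).indicator S x := by
            refine Finset.sum_congr rfl fun x hx => ?_
            rw [Set.indicator_of_mem (hsub x hx)]
        _ ≤ ∑' x, ({x' | v x0 ≤ v x'}).indicator S x := ENNReal.sum_le_tsum s'
    have h2 : S.toOuterMeasure {x' | v x0 ≤ v x'} ≤ ENNReal.ofReal c := by
      have hfin : S.toOuterMeasure {x' | v x0 ≤ v x'} ≠ ⊤ :=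
        ne_top_of_le_ne_top ENNReal.one_ne_top (toOuterMeasure_le_one S _)
      have hle := hx0E
      rw [hE, Set.mem_setOf_eq, prob] at hle
      calc S.toOuterMeasure {x' | v x0 ≤ v x'}
          = ENNReal.ofReal (S.toOuterMeasure {x' | v x0 ≤ v x'}).toReal :=
            (ENNReal.ofReal_toReal hfin).symm
        _ ≤ ENNReal.ofReal c := ENNReal.ofReal_le_ofReal hle
    exact h1.trans h2

lemma log_le_div_exp {u : ℝ} (hu : 0 < u) : Real.log u ≤ u / Real.exp 1 := by
  have he : (0:ℝ) < Real.exp 1 := Real.exp_pos 1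
  have h1 : Real.log (u / Real.exp 1) ≤ u / Real.exp 1 - 1 :=
    Real.log_le_sub_one_of_pos (div_pos hu he)
  rw [Real.log_div hu.ne' he.ne', Real.log_exp] at h1
  linarith

noncomputable def negConst : ℝ := (Real.exp 1 * Real.log 2)⁻¹

lemma negConst_nonneg : 0 ≤ negConst := by
  have h1 : (0 : ℝ) < Real.exp 1 := Real.exp_pos 1
  have h2 : (0 : ℝ) < Real.log 2 := Real.log_pos (by norm_num)
  rw [negConst]; positivity

lemma negConst_lt : negConst < 0.54 := by
  have h1 : (2.7182818283 : ℝ) < Real.exp 1 := Real.exp_one_gt_d9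
  have h2 : (0.6931471803 : ℝ) < Real.log 2 := Real.log_two_gt_d9
  have h3 : (1.8519:ℝ) < Real.exp 1 * Real.log 2 := by nlinarith
  rw [negConst, inv_lt_comm₀ (by linarith) (by norm_num)]
  have h4 : (0.54:ℝ)⁻¹ < 1.8519 := by norm_num
  linarith

lemma neg_term_le {F G : ℝ} (hF : 0 ≤ F) (hG : 0 ≤ G) :
    -(F * Real.logb 2 (F / G)) ≤ negConst * G := by
  rcases eq_or_lt_of_le hF with h | hF
  · simp [← h, mul_nonneg negConst_nonneg hG]
  rcases eq_or_lt_of_le hG with h | hG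
  · simp [← h, Real.logb]
  · have key : Real.log (G / F) ≤ (G / F) / Real.exp 1 := log_le_div_exp (div_pos hG hF)
    have hlog2 : (0:ℝ) < Real.log 2 := Real.log_pos (by norm_num)
    have h1 : Real.logb 2 (F / G) = -Real.logb 2 (G / F) := by
      rw [← Real.logb_inv, inv_div]
    rw [h1]
    have h2 : F * Real.logb 2 (G / F) ≤ negConst * G := by
      rw [Real.logb, negConst, div_eq_mul_inv (Real.log (G/F))]
      calc F * (Real.log (G/F) * (Real.log 2)⁻¹)
          ≤ F * ((G/F)/Real.exp 1 * (Real.log 2)⁻¹) := by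
            refine mul_le_mul_of_nonneg_left ?_ hF.le
            exact mul_le_mul_of_nonneg_right key (inv_nonneg.2 hlog2.le)
        _ = (Real.exp 1 * Real.log 2)⁻¹ * G := by
            rw [mul_inv]
            field_simp
    linarith

lemma markov_term {F G k : ℝ} (hF : 0 < F) (hG : 0 < G) (h : 2 ^ k * G < F) :
    k * F ≤ F * Real.logb 2 (F / G) := by
  have h2k : (0:ℝ) < (2:ℝ) ^ k := Real.rpow_pos_of_pos (by norm_num) k
  have hratio : (2:ℝ) ^ k ≤ F / G := by
    rw [le_div_iff₀ hG]; linarith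
  have hlogb : k ≤ Real.logb 2 (F / G) := by
    have h5 := Real.logb_le_logb_of_le (show (1:ℝ) < 2 by norm_num) h2k hratio
    rwa [Real.logb_rpow (by norm_num) (by norm_num)] at h5
  calc k * F ≤ Real.logb 2 (F / G) * F := mul_le_mul_of_nonneg_right hlogb hF.le
    _ = F * Real.logb 2 (F / G) := mul_comm _ _

lemma prob_eq_tsum {α : Type*} (μ : PMF α) (O : Set α) :
    prob μ O = ∑' q, O.indicator (fun q => (μ q).toReal) q := by
  rw [prob, PMF.toOuterMeasure_apply, ENNReal.tsum_toReal_eq]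
  · refine tsum_congr fun q => ?_
    by_cases h : q ∈ O <;> simp [h]
  · intro q
    exact ne_top_of_le_ne_top (PMF.apply_ne_top μ q) (Set.indicator_le_self O μ q)

end Aux

/-- If the test-statistic selection procedure `A` satisfies the mutual
information bound `I(X; A(X)) ≤ m` (in bits) when `X ∼ S`, then
`γ(α) = (α/2) · 2^{-(2/α)(m + 0.54)}` is a valid p-value correction function: for every
significance level `α ∈ (0,1]`, the probability (over `X ∼ S` and the coins of `A`) that the
selected statistic `φ (A X)` has `S` in its null hypothesis and p-value at most `γ(α)` is at
most `α`. -/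
theorem stmt_17 {X T : Type*} {n : ℕ} (A : (Fin n → X) → PMF T)
    (φ : T → (Fin n → X) → ℝ) (H0 : T → Set (PMF (Fin n → X))) (m : ℝ)
    (S : PMF (Fin n → X))
    (hsum : Summable (miSummandBits (jointPMF S A)))
    (hm : mutualInfoBits (jointPMF S A) ≤ m)
    (α : ℝ) (hα0 : 0 < α) (hα1 : α ≤ 1) :
    prob (jointPMF S A)
      {p : (Fin n → X) × T |
        S ∈ H0 p.2 ∧
        prob S {x | φ p.2 p.1 ≤ φ p.2 x} ≤ (α / 2) * 2 ^ (-(2 / α) * (m + 0.54))} ≤ α := by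
  classical
  set μ := jointPMF S A with hμdef
  set Z := μ.map Prod.snd with hZdef
  have hfst : μ.map Prod.fst = S := jointPMF_map_fst S A
  set k : ℝ := (2/α) * (m + 0.54) with hkdef
  set γ : ℝ := (α / 2) * 2 ^ (-(2 / α) * (m + 0.54)) with hγdef
  have h2k : (0:ℝ) < (2:ℝ) ^ k := Real.rpow_pos_of_pos (by norm_num) k
  have hγnn : 0 ≤ γ := by
    rw [hγdef]
    have : (0:ℝ) < (2:ℝ) ^ (-(2 / α) * (m + 0.54)) := Real.rpow_pos_of_pos (by norm_num) _
    positivity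
  set F : (Fin n → X) × T → ℝ := fun q => (μ q).toReal with hFdef
  set G : (Fin n → X) × T → ℝ := fun q => (S q.1).toReal * (Z q.2).toReal with hGdef
  have hFnn : ∀ q, 0 ≤ F q := fun q => ENNReal.toReal_nonneg
  have hGnn : ∀ q, 0 ≤ G q := fun q => mul_nonneg ENNReal.toReal_nonneg ENNReal.toReal_nonneg
  have hμle : ∀ q, μ q ≤ Z q.2 := by
    rintro ⟨x, t⟩
    rw [hZdef, PMF.map_apply]
    calc μ (x, t) = (if t = ((x, t) : (Fin n → X) × T).2 then μ (x, t) else 0) := by simp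
      _ ≤ ∑' q, if t = q.2 then μ q else 0 := ENNReal.le_tsum (x, t)
  have hQ : ∀ q : (Fin n → X) × T, indepPair S Z q = S q.1 * Z q.2 := by
    rintro ⟨x, t⟩; exact indepPair_apply S Z x t
  have hGQ : ∀ q, G q = (indepPair S Z q).toReal := by
    intro q; rw [hQ, ENNReal.toReal_mul]
  have hFsum : Summable F :=
    ENNReal.summable_toReal (by rw [μ.tsum_coe]; exact ENNReal.one_ne_top)
  have hGsum : Summable G := by
    have h := ENNReal.summable_toReal (f := fun q => indepPair S Z q)
      (by rw [(indepPair S Z).tsum_coe]; exact ENNReal.one_ne_top)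
    exact h.congr fun q => (hGQ q).symm
  have hGtsum : ∑' q, G q = 1 := by
    rw [tsum_congr hGQ, ← ENNReal.tsum_toReal_eq (fun q => PMF.apply_ne_top _ q),
      (indepPair S Z).tsum_coe, ENNReal.toReal_one]
  set mi := miSummandBits μ with hmidef
  have hmi : ∀ q, mi q = F q * Real.logb 2 (F q / G q) := by
    intro q
    rw [hmidef]
    rw [miSummandBits, hfst]
  have hmisum : Summable mi := hsum
  have hm' : ∑' q, mi q ≤ m := hm
  have hGpos : ∀ q, F q ≠ 0 → 0 < G q := by
    rintro ⟨x, t⟩ h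
    have hμq : μ (x, t) ≠ 0 := by
      intro h0; exact h (by rw [hFdef]; simp [h0])
    have hSx : S x ≠ 0 := by
      intro h0; exact hμq (by rw [hμdef, jointPMF_apply, h0, zero_mul])
    have hZt : Z t ≠ 0 := by
      intro h0
      exact hμq (le_antisymm (h0 ▸ hμle (x, t)) zero_le)
    exact mul_pos (ENNReal.toReal_pos hSx (PMF.apply_ne_top S x))
      (ENNReal.toReal_pos hZt (PMF.apply_ne_top Z t))
  set neg : (Fin n → X) × T → ℝ := fun q => max (-(mi q)) 0 with hnegdef
  have hneg_nonneg : ∀ q, 0 ≤ neg q := fun q => le_max_right _ _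
  have hneg_le : ∀ q, neg q ≤ negConst * G q := by
    intro q
    apply max_le
    · rw [hmi q]; exact neg_term_le (hFnn q) (hGnn q)
    · exact mul_nonneg negConst_nonneg (hGnn q)
  have hnegsum : Summable neg :=
    Summable.of_nonneg_of_le hneg_nonneg hneg_le (hGsum.mul_left negConst)
  have htneg : ∑' q, neg q ≤ negConst := by
    calc ∑' q, neg q ≤ ∑' q, negConst * G q :=
          Summable.tsum_le_tsum hneg_le hnegsum (hGsum.mul_left _)
      _ = negConst * ∑' q, G q := tsum_mul_left
      _ = negConst := by rw [hGtsum, mul_one]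
  set pos : (Fin n → X) × T → ℝ := fun q => mi q + neg q with hposdef
  have hpos_nonneg : ∀ q, 0 ≤ pos q := by
    intro q
    have := le_max_left (-(mi q)) 0
    simp only [hposdef]
    linarith
  have hmi_le_pos : ∀ q, mi q ≤ pos q := fun q => le_add_of_nonneg_right (hneg_nonneg q)
  have hpossum : Summable pos := hmisum.add hnegsum
  have htsum_pos : ∑' q, pos q = (∑' q, mi q) + ∑' q, neg q := Summable.tsum_add hmisum hnegsum
  have htpos : ∑' q, pos q ≤ m + 0.54 := by
    have := negConst_lt
    rw [htsum_pos]; linarith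
  have hm054 : 0 < m + 0.54 := by
    by_contra h
    push_neg at h
    have h1 : (0:ℝ) ≤ ∑' q, pos q := tsum_nonneg hpos_nonneg
    have h2 := negConst_lt
    rw [htsum_pos] at h1
    linarith
  have hk_pos : 0 < k := by
    rw [hkdef]; exact mul_pos (div_pos two_pos hα0) hm054
  set B : Set ((Fin n → X) × T) := {q | (2:ℝ) ^ k * G q < F q} with hBdef
  have hmarkov : ∀ q, B.indicator F q ≤ pos q / k := by
    intro q
    by_cases hq : q ∈ B
    · rw [Set.indicator_of_mem hq]
      have hq' : (2:ℝ) ^ k * G q < F q := hq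
      have hFq : 0 < F q := lt_of_le_of_lt (mul_nonneg h2k.le (hGnn q)) hq'
      have hGq : 0 < G q := hGpos q hFq.ne'
      have hmt := markov_term hFq hGq hq'
      rw [← hmi q] at hmt
      rw [le_div_iff₀ hk_pos]
      calc F q * k = k * F q := mul_comm _ _
        _ ≤ mi q := hmt
        _ ≤ pos q := hmi_le_pos q
    · rw [Set.indicator_of_notMem hq]
      exact div_nonneg (hpos_nonneg q) hk_pos.le
  have hindFsum : ∀ U : Set ((Fin n → X) × T), Summable (U.indicator F) := fun U =>
    Summable.of_nonneg_of_le (fun q => Set.indicator_nonneg (fun q _ => hFnn q) q)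
      (fun q => Set.indicator_le_self' (fun q _ => hFnn q) q) hFsum
  have hindGsum : ∀ U : Set ((Fin n → X) × T), Summable (U.indicator G) := fun U =>
    Summable.of_nonneg_of_le (fun q => Set.indicator_nonneg (fun q _ => hGnn q) q)
      (fun q => Set.indicator_le_self' (fun q _ => hGnn q) q) hGsum
  have hprobB : ∑' q, B.indicator F q ≤ α / 2 := by
    calc ∑' q, B.indicator F q ≤ ∑' q, pos q / k :=
          Summable.tsum_le_tsum hmarkov (hindFsum B) (hpossum.div_const k)
      _ = (∑' q, pos q) / k := tsum_div_const
      _ ≤ (m + 0.54) / k := div_le_div_of_nonneg_right htpos hk_pos.le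
      _ = α / 2 := by
          rw [hkdef]
          field_simp
  set O : Set ((Fin n → X) × T) :=
    {p | S ∈ H0 p.2 ∧ prob S {x | φ p.2 p.1 ≤ φ p.2 x} ≤ γ} with hOdef
  show prob μ O ≤ α
  have hQO : (indepPair S Z).toOuterMeasure O ≤ ENNReal.ofReal γ := by
    rw [PMF.toOuterMeasure_apply]
    have step : ∀ t : T, ∑' x, O.indicator (indepPair S Z) (x, t) ≤ Z t * ENNReal.ofReal γ := by
      intro t
      set Et : Set (Fin n → X) := {y | prob S {x' | φ t y ≤ φ t x'} ≤ γ} with hEt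
      by_cases ht : S ∈ H0 t
      · have heq : ∀ x, O.indicator (indepPair S Z) (x, t)
            = Z t * (Et.indicator S x) := by
          intro x
          by_cases hx : x ∈ Et
          · rw [Set.indicator_of_mem (show ((x, t) : (Fin n → X) × T) ∈ O from ⟨ht, hx⟩),
              Set.indicator_of_mem hx, hQ, mul_comm]
          · rw [Set.indicator_of_notMem (fun hmem => hx hmem.2),
              Set.indicator_of_notMem hx, mul_zero]
        rw [tsum_congr heq, ENNReal.tsum_mul_left]
        refine mul_le_mul_right ?_ (Z t)
        rw [← PMF.toOuterMeasure_apply]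
        exact pvalue_bound S (φ t) γ
      · have heq : ∀ x, O.indicator (indepPair S Z) (x, t) = 0 := fun x =>
          Set.indicator_of_notMem (fun hmem => ht hmem.1) _
        rw [tsum_congr heq]
        simp
    calc ∑' q, O.indicator (indepPair S Z) q
        = ∑' (x) (t), O.indicator (indepPair S Z) (x, t) := ENNReal.tsum_prod'
      _ = ∑' (t) (x), O.indicator (indepPair S Z) (x, t) := ENNReal.tsum_comm
      _ ≤ ∑' t, Z t * ENNReal.ofReal γ := ENNReal.tsum_le_tsum step
      _ = ENNReal.ofReal γ := by rw [ENNReal.tsum_mul_right, Z.tsum_coe, one_mul]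
  have hQOr : ∑' q, O.indicator G q ≤ γ := by
    have hconv : ∀ q, O.indicator G q = (O.indicator (indepPair S Z) q).toReal := by
      intro q
      by_cases hq : q ∈ O <;> simp [hq, hGQ q]
    rw [tsum_congr hconv,
      ← ENNReal.tsum_toReal_eq
        (fun q => ne_top_of_le_ne_top (PMF.apply_ne_top _ q) (Set.indicator_le_self _ _ q))]
    calc (∑' q, O.indicator (indepPair S Z) q).toReal
        ≤ (ENNReal.ofReal γ).toReal := by
          refine ENNReal.toReal_mono ENNReal.ofReal_ne_top ?_
          rw [← PMF.toOuterMeasure_apply]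
          exact hQO
      _ = γ := ENNReal.toReal_ofReal hγnn
  have hpoint : ∀ q, O.indicator F q ≤ B.indicator F q + (2:ℝ) ^ k * O.indicator G q := by
    intro q
    by_cases hqO : q ∈ O
    · by_cases hqB : q ∈ B
      · rw [Set.indicator_of_mem hqO, Set.indicator_of_mem hqB]
        have h0 : 0 ≤ (2:ℝ) ^ k * O.indicator G q :=
          mul_nonneg h2k.le (Set.indicator_nonneg (fun q _ => hGnn q) q)
        linarith
      · rw [Set.indicator_of_mem hqO, Set.indicator_of_notMem hqB,
          Set.indicator_of_mem hqO, zero_add]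
        exact le_of_not_gt hqB
    · rw [Set.indicator_of_notMem hqO, Set.indicator_of_notMem hqO, mul_zero, add_zero]
      exact Set.indicator_nonneg (fun q _ => hFnn q) q
  have hfinal : 2 ^ k * γ = α / 2 := by
    have hexp : -(2 / α) * (m + 0.54) = -k := by rw [hkdef]; ring
    rw [hγdef, hexp, Real.rpow_neg (by norm_num : (0:ℝ) ≤ 2)]
    field_simp
  calc prob μ O = ∑' q, O.indicator F q := prob_eq_tsum μ O
    _ ≤ ∑' q, (B.indicator F q + (2:ℝ) ^ k * O.indicator G q) :=
        Summable.tsum_le_tsum hpoint (hindFsum O) ((hindFsum B).add ((hindGsum O).mul_left _))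
    _ = (∑' q, B.indicator F q) + (2:ℝ) ^ k * ∑' q, O.indicator G q := by
        rw [Summable.tsum_add (hindFsum B) ((hindGsum O).mul_left _), tsum_mul_left]
    _ ≤ α / 2 + (2:ℝ) ^ k * γ :=
        add_le_add hprobB (mul_le_mul_of_nonneg_left hQOr h2k.le)
    _ = α := by rw [hfinal]; ring
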